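/- Let ρ be a density operator on a finite-dimensional Hilbert space with eigenvalues p_1↓ ≥ p_2↓ ≥ ... ≥ p_N↓ (N = d_O·d_R), and let |φ_1⟩ ∈ ℂ^{d_O} be a fixed unit vector. Then for every unitary U on ℂ^{d_O} ⊗ ℂ^{d_R}, the probability ⟨φ_1| Tr_R[U ρ U†] |φ_1⟩ is at most Σ_{m=1}^{d_R} p_m↓, and this bound is attained by any unitary mapping the eigenvectors |ψ_m⟩ of ρ associated with the d_R largest eigenvalues to product vectors |φ_1⟩ ⊗ |ξ'_m⟩ for some orthonormal basis {|ξ'_m⟩} of ℂ^{d_R}. -/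

import Mathlib

open Finset Matrix

/-- The rank-one projector `|x⟩⟨x|`. -/
noncomputable def outer {n : Type*} (x : n → ℂ) : Matrix n n ℂ :=
  Matrix.of fun a b => x a * star (x b)

/-- Partial trace over the second (reservoir) factor. -/
noncomputable def ptraceR {dO dR : ℕ} (M : Matrix (Fin dO × Fin dR) (Fin dO × Fin dR) ℂ) :
    Matrix (Fin dO) (Fin dO) ℂ :=
  Matrix.of fun i j => ∑ k : Fin dR, M (i, k) (j, k)


lemma indicator_sum {N K : ℕ} (hK : K ≤ N) (p : Fin N → ℝ) :
    ∑ n : Fin N, (if (n : ℕ) < K then p n else 0) = ∑ m : Fin K, p (Fin.castLE hK m) := by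
  classical
  set F : ℕ → ℝ := fun i => if h : i < N then p ⟨i, h⟩ else 0 with hF
  have h1 : ∑ n : Fin N, (if (n : ℕ) < K then p n else 0)
      = ∑ i ∈ range N, (if i < K then F i else 0) := by
    rw [← Fin.sum_univ_eq_sum_range (fun i => if i < K then F i else 0) N]
    refine Finset.sum_congr rfl fun n _ => ?_
    simp [hF, n.isLt]
  have h2 : ∑ m : Fin K, p (Fin.castLE hK m) = ∑ i ∈ range K, F i := by
    rw [← Fin.sum_univ_eq_sum_range F K]
    refine Finset.sum_congr rfl fun m _ => ?_
    simp [hF, lt_of_lt_of_le m.isLt hK, Fin.castLE]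
  rw [h1, h2]
  rw [← Finset.sum_subset (Finset.range_subset_range.2 hK) (fun i _ hi => by
    simp only [Finset.mem_range, not_lt] at hi
    exact if_neg (not_lt.2 hi))]
  exact Finset.sum_congr rfl fun i hi => if_pos (Finset.mem_range.1 hi)

lemma key_bound {N K : ℕ} (hK : K ≤ N) (p c : Fin N → ℝ) (hp : Antitone p)
    (hp0 : ∀ n, 0 ≤ p n) (hc0 : ∀ n, 0 ≤ c n) (hc1 : ∀ n, c n ≤ 1)
    (hcs : ∑ n, c n ≤ K) :
    ∑ n, p n * c n ≤ ∑ m : Fin K, p (Fin.castLE hK m) := by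
  classical
  set τ : ℝ := if h : K < N then p ⟨K, h⟩ else 0 with hτ
  have hτ0 : 0 ≤ τ := by
    rw [hτ]; split <;> simp [hp0]
  have hτle : ∀ n : Fin N, (n : ℕ) < K → τ ≤ p n := by
    intro n hn
    rw [hτ]; split
    · exact hp (by simp [Fin.le_def, le_of_lt hn])
    · exact hp0 n
  have hτge : ∀ n : Fin N, ¬ (n : ℕ) < K → p n ≤ τ := by
    intro n hn
    rw [hτ]; split
    · next h => exact hp (by simp [Fin.le_def]; omega)
    · next h => exact absurd (lt_of_lt_of_le n.isLt (le_of_not_gt h)) hn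
  have step : ∀ n : Fin N, p n * c n ≤ (if (n : ℕ) < K then p n else 0) + τ * (c n - (if (n : ℕ) < K then 1 else 0)) := by
    intro n
    by_cases h : (n : ℕ) < K
    · simp only [if_pos h]
      nlinarith [hτle n h, hc1 n, hp0 n]
    · simp only [if_neg h]
      nlinarith [hτge n h, hc0 n]
  calc ∑ n, p n * c n ≤ ∑ n : Fin N, ((if (n : ℕ) < K then p n else 0) + τ * (c n - (if (n : ℕ) < K then 1 else 0))) :=
        Finset.sum_le_sum fun n _ => step n
    _ = (∑ n : Fin N, (if (n : ℕ) < K then p n else 0)) + τ * ((∑ n, c n) - ∑ n : Fin N, (if (n : ℕ) < K then (1:ℝ) else 0)) := by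
        rw [Finset.sum_add_distrib]
        congr 1
        rw [mul_sub, Finset.mul_sum, Finset.mul_sum, ← Finset.sum_sub_distrib]
        exact Finset.sum_congr rfl fun n _ => by ring
    _ ≤ ∑ m : Fin K, p (Fin.castLE hK m) := by
        rw [indicator_sum hK p]
        have h1 : ∑ n : Fin N, (if (n : ℕ) < K then (1:ℝ) else 0) = K := by
          have := indicator_sum hK (fun _ => (1:ℝ))
          simpa using this
        rw [h1]
        nlinarith [hcs, hτ0]
lemma conj_outer {m : Type*} [Fintype m] [DecidableEq m] (U : Matrix m m ℂ) (v : m → ℂ) :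
    U * outer v * Uᴴ = outer (U.mulVec v) := by
  ext a b
  simp only [outer, Matrix.mul_apply, Matrix.of_apply, conjTranspose_apply, Matrix.mulVec,
    dotProduct, Pi.star_apply, star_sum, star_mul', Finset.sum_mul, Finset.mul_sum]
  refine Finset.sum_congr rfl fun i _ => Finset.sum_congr rfl fun j _ => by ring

lemma conj_sum_outer {m : Type*} [Fintype m] [DecidableEq m] (U : Matrix m m ℂ) {ι : Type*}
    (s : Finset ι) (c : ι → ℂ) (v : ι → m → ℂ) :
    U * (∑ n ∈ s, c n • outer (v n)) * Uᴴ = ∑ n ∈ s, c n • outer (U.mulVec (v n)) := by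
  rw [Finset.mul_sum, Finset.sum_mul]
  refine Finset.sum_congr rfl fun n _ => ?_
  rw [Matrix.mul_smul, Matrix.smul_mul, conj_outer]

lemma sum_rot {M : Type*} [AddCommMonoid M] {a b c : Type*} [Fintype a] [Fintype b] [Fintype c]
    (f : a → b → c → M) : (∑ x, ∑ y, ∑ k, f x y k) = ∑ k, ∑ y, ∑ x, f x y k :=
  calc (∑ x, ∑ y, ∑ k, f x y k) = ∑ y, ∑ x, ∑ k, f x y k := Finset.sum_comm
    _ = ∑ y, ∑ k, ∑ x, f x y k := Finset.sum_congr rfl fun _ _ => Finset.sum_comm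
    _ = ∑ k, ∑ y, ∑ x, f x y k := Finset.sum_comm

lemma prob_outer {dO dR : ℕ} (φ1 : Fin dO → ℂ) (v : Fin dO × Fin dR → ℂ) :
    star φ1 ⬝ᵥ (ptraceR (outer v)).mulVec φ1
      = ∑ k, (∑ i, star (φ1 i) * v (i, k)) * star (∑ i, star (φ1 i) * v (i, k)) := by
  simp only [ptraceR, dotProduct, Matrix.mulVec, Matrix.of_apply, Pi.star_apply,
    outer, Finset.mul_sum, Finset.sum_mul, star_sum, star_mul', star_star]
  rw [sum_rot]
  refine Finset.sum_congr rfl fun k _ => Finset.sum_congr rfl fun i _ =>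
    Finset.sum_congr rfl fun j _ => by ring

lemma ptraceR_sum {dO dR : ℕ} {ι : Type*} (s : Finset ι)
    (A : ι → Matrix (Fin dO × Fin dR) (Fin dO × Fin dR) ℂ) :
    ptraceR (∑ n ∈ s, A n) = ∑ n ∈ s, ptraceR (A n) := by
  ext i j
  simp only [ptraceR, Matrix.of_apply, Matrix.sum_apply]
  rw [Finset.sum_comm]

lemma ptraceR_smul {dO dR : ℕ} (c : ℂ) (A : Matrix (Fin dO × Fin dR) (Fin dO × Fin dR) ℂ) :
    ptraceR (c • A) = c • ptraceR A := by
  ext i j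
  simp [ptraceR, Finset.mul_sum]

lemma prob_expand {dO dR : ℕ} (φ1 : Fin dO → ℂ) {ι : Type*} (s : Finset ι) (c : ι → ℝ)
    (u : ι → (Fin dO × Fin dR → ℂ)) :
    star φ1 ⬝ᵥ (ptraceR (∑ n ∈ s, (c n : ℂ) • outer (u n))).mulVec φ1
      = ∑ n ∈ s, (c n : ℂ) * ∑ k, Complex.normSq (∑ i, (starRingEnd ℂ) (φ1 i) * u n (i, k)) := by
  rw [ptraceR_sum]
  simp only [ptraceR_smul]
  have hmv : (∑ n ∈ s, (c n : ℂ) • ptraceR (outer (u n))) *ᵥ φ1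
      = ∑ n ∈ s, ((c n : ℂ) • ptraceR (outer (u n))) *ᵥ φ1 := by
    funext i
    simp only [Matrix.mulVec, dotProduct, Matrix.sum_apply, Finset.sum_apply,
      Finset.sum_mul]
    rw [Finset.sum_comm]
  rw [hmv]
  have hdp : star φ1 ⬝ᵥ (∑ n ∈ s, ((c n : ℂ) • ptraceR (outer (u n))) *ᵥ φ1)
      = ∑ n ∈ s, star φ1 ⬝ᵥ (((c n : ℂ) • ptraceR (outer (u n))) *ᵥ φ1) := by
    simp only [dotProduct, Finset.sum_apply, Finset.mul_sum]
    rw [Finset.sum_comm]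
  rw [hdp]
  refine Finset.sum_congr rfl fun n _ => ?_
  rw [Matrix.smul_mulVec, dotProduct_smul, smul_eq_mul, prob_outer]
  congr 1
  push_cast
  refine Finset.sum_congr rfl fun k _ => ?_
  rw [← Complex.mul_conj]
  rfl

section Main

variable {dO dR : ℕ}

lemma normSq_eq_norm_sq (z : ℂ) : Complex.normSq z = ‖z‖ ^ 2 := by
  rw [Complex.normSq_eq_norm_sq]

lemma euclid_inner (x y : EuclideanSpace ℂ (Fin dO × Fin dR)) :
    (inner ℂ x y : ℂ) = ∑ q, (starRingEnd ℂ) (x q) * y q := by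
  simp [PiLp.inner_apply, RCLike.inner_apply]
  exact Finset.sum_congr rfl fun _ _ => mul_comm _ _

theorem max_probability_information_erasure {dO dR : ℕ} (hdO : 0 < dO)
    (p : Fin (dO * dR) → ℝ) (hp_anti : Antitone p) (hp_nonneg : ∀ n, 0 ≤ p n)
    (hp_sum : ∑ n, p n = 1)
    (ψ : Fin (dO * dR) → (Fin dO × Fin dR → ℂ))
    (hψ : ∀ n m, star (ψ n) ⬝ᵥ ψ m = if n = m then 1 else 0)
    (φ1 : Fin dO → ℂ) (hφ1 : star φ1 ⬝ᵥ φ1 = 1)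
    (ρ : Matrix (Fin dO × Fin dR) (Fin dO × Fin dR) ℂ)
    (hρ : ρ = ∑ n, (p n : ℂ) • outer (ψ n)) :
    (∀ U ∈ Matrix.unitaryGroup (Fin dO × Fin dR) ℂ,
      (star φ1 ⬝ᵥ (ptraceR (U * ρ * Uᴴ)).mulVec φ1).re
        ≤ ∑ m : Fin dR, p (Fin.castLE (Nat.le_mul_of_pos_left dR hdO) m)) ∧
    (∀ U ∈ Matrix.unitaryGroup (Fin dO × Fin dR) ℂ,
      ∀ ξ' : Fin dR → (Fin dR → ℂ),
      (∀ i j, star (ξ' i) ⬝ᵥ ξ' j = if i = j then 1 else 0) →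
      (∀ m : Fin dR,
        U.mulVec (ψ (Fin.castLE (Nat.le_mul_of_pos_left dR hdO) m))
          = fun a => φ1 a.1 * ξ' m a.2) →
      (star φ1 ⬝ᵥ (ptraceR (U * ρ * Uᴴ)).mulVec φ1).re
        = ∑ m : Fin dR, p (Fin.castLE (Nat.le_mul_of_pos_left dR hdO) m)) := by
  classical
  have hK : dR ≤ dO * dR := Nat.le_mul_of_pos_left dR hdO
  have hφ1' : (∑ i, (starRingEnd ℂ) (φ1 i) * φ1 i) = 1 := by
    simpa [dotProduct, RCLike.star_def] using hφ1
  set S : Matrix (Fin dO × Fin dR) (Fin dO × Fin dR) ℂ → Fin (dO * dR) → Fin dR → ℂ :=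
    fun U n k => ∑ i, (starRingEnd ℂ) (φ1 i) * (U *ᵥ ψ n) (i, k) with hSdef
  have prob_eq : ∀ U : Matrix (Fin dO × Fin dR) (Fin dO × Fin dR) ℂ,
      (star φ1 ⬝ᵥ (ptraceR (U * ρ * Uᴴ)).mulVec φ1).re
        = ∑ n, p n * ∑ k, Complex.normSq (S U n k) := by
    intro U
    rw [hρ, conj_sum_outer, prob_expand]
    rw [show (∑ n, ((p n : ℂ) * ↑(∑ k, Complex.normSq (∑ i, (starRingEnd ℂ) (φ1 i) * (U *ᵥ ψ n) (i, k)))))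
        = ((∑ n, p n * ∑ k, Complex.normSq (S U n k) : ℝ) : ℂ) from by push_cast [hSdef]; rfl]
    exact Complex.ofReal_re _
  -- the orthonormal family |φ1⟩ ⊗ |e_k⟩
  set w : Fin dR → EuclideanSpace ℂ (Fin dO × Fin dR) :=
    fun k => WithLp.toLp 2 (fun q : Fin dO × Fin dR => φ1 q.1 * (if q.2 = k then 1 else 0)) with hwdef
  have hw : Orthonormal ℂ w := by
    rw [orthonormal_iff_ite]
    intro k l
    rw [euclid_inner, Fintype.sum_prod_type]
    by_cases h : k = l
    · subst h
      have hcm : ∑ x : Fin dO, φ1 x * (starRingEnd ℂ) (φ1 x) = 1 := by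
        rw [← hφ1']; exact Finset.sum_congr rfl fun x _ => mul_comm _ _
      simp [hwdef, mul_ite, ite_mul, apply_ite (starRingEnd ℂ), Finset.sum_ite_eq', hcm, hφ1']
    · simp [hwdef, mul_ite, ite_mul, apply_ite (starRingEnd ℂ), Finset.sum_ite_eq', h,
        if_neg h]
      exact fun hlk => absurd hlk (fun e => h e.symm)
  set toE : (Fin dO × Fin dR → ℂ) → EuclideanSpace ℂ (Fin dO × Fin dR) := fun v => WithLp.toLp 2 v with htoE
  have hdot : ∀ U ∈ Matrix.unitaryGroup (Fin dO × Fin dR) ℂ,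
      ∀ x y : Fin dO × Fin dR → ℂ, star (U *ᵥ x) ⬝ᵥ (U *ᵥ y) = star x ⬝ᵥ y := by
    intro U hU x y
    have hUU : Uᴴ * U = 1 := by
      simpa [Matrix.star_eq_conjTranspose] using (Unitary.mem_iff.mp hU).1
    rw [Matrix.star_mulVec, dotProduct_mulVec, Matrix.vecMul_vecMul, hUU,
      Matrix.vecMul_one]
  have hinner_dot : ∀ x y : Fin dO × Fin dR → ℂ,
      (inner ℂ (toE x) (toE y) : ℂ) = star x ⬝ᵥ y := by
    intro x y
    rw [euclid_inner]
    simp [htoE, dotProduct, RCLike.star_def]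
  have hu : ∀ U ∈ Matrix.unitaryGroup (Fin dO × Fin dR) ℂ,
      Orthonormal ℂ (fun n => toE (U *ᵥ ψ n)) := by
    intro U hU
    rw [orthonormal_iff_ite]
    intro n m
    rw [hinner_dot, hdot U hU, hψ]
  have hwS : ∀ (U : Matrix (Fin dO × Fin dR) (Fin dO × Fin dR) ℂ) (k : Fin dR) (n : Fin (dO * dR)),
      (inner ℂ (w k) (toE (U *ᵥ ψ n)) : ℂ) = S U n k := by
    intro U k n
    rw [euclid_inner, Fintype.sum_prod_type, hSdef]
    simp [hwdef, htoE, mul_ite, ite_mul, apply_ite (starRingEnd ℂ), Finset.sum_ite_eq']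
  -- c n bounds
  have hc0 : ∀ (U) (n : Fin (dO * dR)), 0 ≤ ∑ k, Complex.normSq (S U n k) :=
    fun U n => Finset.sum_nonneg fun k _ => Complex.normSq_nonneg _
  have hc1 : ∀ U ∈ Matrix.unitaryGroup (Fin dO × Fin dR) ℂ,
      ∀ n : Fin (dO * dR), ∑ k, Complex.normSq (S U n k) ≤ 1 := by
    intro U hU n
    have B := hw.sum_inner_products_le (toE (U *ᵥ ψ n)) (s := Finset.univ)
    have hn : ‖toE (U *ᵥ ψ n)‖ = 1 :=
      (hu U hU).1 n
    rw [hn] at B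
    calc ∑ k, Complex.normSq (S U n k)
        = ∑ k, ‖(inner ℂ (w k) (toE (U *ᵥ ψ n)) : ℂ)‖ ^ 2 := by
          refine Finset.sum_congr rfl fun k _ => ?_
          rw [hwS U k n, normSq_eq_norm_sq]
      _ ≤ 1 ^ 2 := B
      _ = 1 := one_pow 2
  have hcs : ∀ U ∈ Matrix.unitaryGroup (Fin dO × Fin dR) ℂ,
      ∑ n : Fin (dO * dR), ∑ k, Complex.normSq (S U n k) ≤ (dR : ℝ) := by
    intro U hU
    rw [Finset.sum_comm]
    calc ∑ k : Fin dR, ∑ n : Fin (dO * dR), Complex.normSq (S U n k)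
        ≤ ∑ _k : Fin dR, (1 : ℝ) := by
          refine Finset.sum_le_sum fun k _ => ?_
          have B := (hu U hU).sum_inner_products_le (w k) (s := Finset.univ)
          rw [hw.1 k] at B
          calc ∑ n : Fin (dO * dR), Complex.normSq (S U n k)
              = ∑ n : Fin (dO * dR), ‖(inner ℂ (toE (U *ᵥ ψ n)) (w k) : ℂ)‖ ^ 2 := by
                refine Finset.sum_congr rfl fun n _ => ?_
                rw [norm_inner_symm, hwS U k n, normSq_eq_norm_sq]
            _ ≤ 1 ^ 2 := B
            _ = 1 := one_pow 2
      _ = (dR : ℝ) := by simp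
  constructor
  · -- inequality
    intro U hU
    rw [prob_eq U]
    exact key_bound hK p (fun n => ∑ k, Complex.normSq (S U n k)) hp_anti hp_nonneg
      (hc0 U) (hc1 U hU) (hcs U hU)
  · -- equality
    intro U hU ξ' hξ hmap
    rw [prob_eq U]
    have hcval : ∀ n : Fin (dO * dR),
        (∑ k, Complex.normSq (S U n k)) = (if (n : ℕ) < dR then 1 else 0) := by
      intro n
      by_cases h : (n : ℕ) < dR
      · have hn : n = Fin.castLE hK ⟨(n : ℕ), h⟩ := by
          apply Fin.ext; rfl
        have hm := hmap ⟨(n : ℕ), h⟩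
        rw [← hn] at hm
        have hS : ∀ k, S U n k = ξ' ⟨(n : ℕ), h⟩ k := by
          intro k
          rw [hSdef]
          simp only []
          rw [hm]
          rw [show (∑ i, (starRingEnd ℂ) (φ1 i) * (φ1 i * ξ' ⟨(n : ℕ), h⟩ k))
              = (∑ i, (starRingEnd ℂ) (φ1 i) * φ1 i) * ξ' ⟨(n : ℕ), h⟩ k from by
            rw [Finset.sum_mul]
            exact Finset.sum_congr rfl fun i _ => by ring]
          rw [hφ1', one_mul]
        have h1 := hξ ⟨(n : ℕ), h⟩ ⟨(n : ℕ), h⟩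
        rw [if_pos rfl] at h1
        have h2 : ((∑ k, Complex.normSq (ξ' ⟨(n : ℕ), h⟩ k) : ℝ) : ℂ) = 1 := by
          push_cast
          simpa [Complex.normSq_eq_conj_mul_self, dotProduct, RCLike.star_def] using h1
        rw [if_pos h]
        simp only [hS]
        exact_mod_cast h2
      · have horto : ∀ m : Fin dR, ∑ l, (starRingEnd ℂ) (ξ' m l) * S U n l = 0 := by
          intro m
          have hne : Fin.castLE hK m ≠ n := by
            intro he
            exact h (he ▸ m.isLt)
          have h1 := hψ (Fin.castLE hK m) n
          rw [if_neg hne] at h1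
          have h4 : star (U *ᵥ ψ (Fin.castLE hK m)) ⬝ᵥ (U *ᵥ ψ n) = 0 := by
            rw [hdot U hU, h1]
          rw [hmap m] at h4
          rw [← h4]
          rw [show (star (fun a : Fin dO × Fin dR => φ1 a.1 * ξ' m a.2) ⬝ᵥ (U *ᵥ ψ n))
              = ∑ i, ∑ l, (starRingEnd ℂ) (φ1 i) * (starRingEnd ℂ) (ξ' m l) * (U *ᵥ ψ n) (i, l) from by
            rw [dotProduct, Fintype.sum_prod_type]
            refine Finset.sum_congr rfl fun i _ => Finset.sum_congr rfl fun l _ => ?_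
            simp [RCLike.star_def]]
          rw [Finset.sum_comm]
          refine Finset.sum_congr rfl fun l _ => ?_
          rw [hSdef]
          simp only []
          rw [Finset.mul_sum]
          exact Finset.sum_congr rfl fun i _ => by ring
        have hC : ∀ k l : Fin dR, (∑ m, ξ' m k * (starRingEnd ℂ) (ξ' m l))
            = if k = l then 1 else 0 := by
          set C : Matrix (Fin dR) (Fin dR) ℂ := Matrix.of (fun k m => ξ' m k) with hCdef
          have h1 : Cᴴ * C = 1 := by
            ext a b
            rw [Matrix.mul_apply]
            have := hξ a b
            simp only [dotProduct, RCLike.star_def, Pi.star_apply] at this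
            simp only [Matrix.conjTranspose_apply, hCdef, Matrix.of_apply, Matrix.one_apply,
              RCLike.star_def]
            rw [← this]
          have h2 : C * Cᴴ = 1 := mul_eq_one_comm.mpr h1
          intro k l
          have h3 := congrFun (congrFun h2 k) l
          simp only [Matrix.mul_apply, Matrix.conjTranspose_apply, hCdef, Matrix.of_apply,
            Matrix.one_apply, RCLike.star_def] at h3
          simpa [Complex.star_def] using h3
        have hS0 : ∀ k, S U n k = 0 := by
          intro k
          have e1 : S U n k = ∑ l, (if k = l then (1 : ℂ) else 0) * S U n l := by
            simp [ite_mul, Finset.sum_ite_eq]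
          rw [e1]
          rw [show (∑ l, (if k = l then (1 : ℂ) else 0) * S U n l)
              = ∑ l, (∑ m, ξ' m k * (starRingEnd ℂ) (ξ' m l)) * S U n l from
            Finset.sum_congr rfl fun l _ => by rw [hC]]
          rw [show (∑ l, (∑ m, ξ' m k * (starRingEnd ℂ) (ξ' m l)) * S U n l)
              = ∑ m, ξ' m k * (∑ l, (starRingEnd ℂ) (ξ' m l) * S U n l) from by
            simp only [Finset.sum_mul, Finset.mul_sum]
            rw [Finset.sum_comm]
            exact Finset.sum_congr rfl fun m _ => Finset.sum_congr rfl fun l _ => by ring]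
          simp [horto]
        rw [if_neg h]
        simp [hS0]
    rw [show (∑ n, p n * ∑ k, Complex.normSq (S U n k))
        = ∑ n : Fin (dO * dR), (if (n : ℕ) < dR then p n else 0) from
      Finset.sum_congr rfl fun n _ => by rw [hcval n]; split <;> simp]
    exact indicator_sum hK p

end Main
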